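/- Let A, B ∈ ℤ[x] be coprime monic polynomials with resultant Δ, G(n) = gcd(A(n), B(n)), and p a prime. If p^{ω₁} divides G(n₁) and p^{ω₂} divides G(n₂) for integers n₁ ≠ n₂, then ν_p(n₂ − n₁) ≥ ω₁ + ω₂ − ν_p(Δ). -/

import Mathlib

open Polynomial

/-- The Sylvester matrix of two integer polynomials `A` and `B`, of size
`(d+e) × (d+e)` where `d = deg A`, `e = deg B`: the first `e` columns carry the
(shifted) coefficients of `A`, the last `d` columns those of `B`. -/
noncomputable def sylvesterMatrix (A B : Polynomial ℤ) :
    Matrix (Fin (A.natDegree + B.natDegree)) (Fin (A.natDegree + B.natDegree)) ℤ :=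
  Matrix.of fun i j =>
    if (j : ℕ) < B.natDegree then
      if (j : ℕ) ≤ (i : ℕ) ∧ (i : ℕ) ≤ (j : ℕ) + A.natDegree then
        A.coeff (A.natDegree + (j : ℕ) - (i : ℕ)) else 0
    else
      if (j : ℕ) - B.natDegree ≤ (i : ℕ) ∧ (i : ℕ) ≤ (j : ℕ) then
        B.coeff ((j : ℕ) - (i : ℕ)) else 0

/-- The resultant of two integer polynomials, as the determinant of their Sylvester matrix. -/
noncomputable def resultant (A B : Polynomial ℤ) : ℤ := (sylvesterMatrix A B).det

/-- The weighted column sums of the Sylvester matrix are evaluations of (shifts of) `A` and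
`B`. -/
lemma sylvester_col_eval (A B : Polynomial ℤ) (t : ℤ)
    (j : Fin (A.natDegree + B.natDegree)) :
    (∑ i : Fin (A.natDegree + B.natDegree),
        t ^ (A.natDegree + B.natDegree - 1 - (i : ℕ)) * sylvesterMatrix A B i j)
      = if (j : ℕ) < B.natDegree then t ^ (B.natDegree - 1 - (j : ℕ)) * A.eval t
        else t ^ (A.natDegree + B.natDegree - 1 - (j : ℕ)) * B.eval t := by
  have hj : (j : ℕ) < A.natDegree + B.natDegree := j.2
  simp only [sylvesterMatrix, Matrix.of_apply]
  by_cases hje : (j : ℕ) < B.natDegree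
  · simp only [if_pos hje]
    rw [Fin.sum_univ_eq_sum_range (fun i =>
      t ^ (A.natDegree + B.natDegree - 1 - i) *
        (if (j : ℕ) ≤ i ∧ i ≤ (j : ℕ) + A.natDegree then
          A.coeff (A.natDegree + (j : ℕ) - i) else 0))]
    have h1 : ∀ i ∈ Finset.range (A.natDegree + B.natDegree),
        t ^ (A.natDegree + B.natDegree - 1 - i) *
          (if (j : ℕ) ≤ i ∧ i ≤ (j : ℕ) + A.natDegree then
            A.coeff (A.natDegree + (j : ℕ) - i) else 0)
        = (if (j : ℕ) ≤ i ∧ i ≤ (j : ℕ) + A.natDegree then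
            t ^ (A.natDegree + B.natDegree - 1 - i) * A.coeff (A.natDegree + (j : ℕ) - i)
          else 0) := by
      intro i _; split_ifs <;> ring
    rw [Finset.sum_congr rfl h1, ← Finset.sum_filter]
    have h2 : (Finset.range (A.natDegree + B.natDegree)).filter
        (fun i => (j : ℕ) ≤ i ∧ i ≤ (j : ℕ) + A.natDegree)
        = Finset.Icc (j : ℕ) ((j : ℕ) + A.natDegree) := by
      ext i
      simp only [Finset.mem_filter, Finset.mem_range, Finset.mem_Icc]
      omega
    rw [h2]
    have h3 : ∑ a ∈ Finset.Icc (j : ℕ) ((j : ℕ) + A.natDegree),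
        t ^ (A.natDegree + B.natDegree - 1 - a) * A.coeff (A.natDegree + (j : ℕ) - a)
        = ∑ k ∈ Finset.range (A.natDegree + 1),
            t ^ (B.natDegree - 1 - (j : ℕ)) * (A.coeff k * t ^ k) := by
      refine Finset.sum_nbij' (fun a => A.natDegree + (j : ℕ) - a)
        (fun k => A.natDegree + (j : ℕ) - k) ?_ ?_ ?_ ?_ ?_
      · intro a ha; simp only [Finset.mem_Icc] at ha; simp only [Finset.mem_range]; omega
      · intro a ha; simp only [Finset.mem_range] at ha; simp only [Finset.mem_Icc]; omega
      · intro a ha; simp only [Finset.mem_Icc] at ha; omega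
      · intro a ha; simp only [Finset.mem_range] at ha; omega
      · intro a ha; simp only [Finset.mem_Icc] at ha
        have hexp : A.natDegree + B.natDegree - 1 - a
            = (B.natDegree - 1 - (j : ℕ)) + (A.natDegree + (j : ℕ) - a) := by omega
        rw [hexp, pow_add]; ring
    rw [h3, ← Finset.mul_sum, eval_eq_sum_range]
  · simp only [if_neg hje]
    push_neg at hje
    rw [Fin.sum_univ_eq_sum_range (fun i =>
      t ^ (A.natDegree + B.natDegree - 1 - i) *
        (if (j : ℕ) - B.natDegree ≤ i ∧ i ≤ (j : ℕ) then
          B.coeff ((j : ℕ) - i) else 0))]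
    have h1 : ∀ i ∈ Finset.range (A.natDegree + B.natDegree),
        t ^ (A.natDegree + B.natDegree - 1 - i) *
          (if (j : ℕ) - B.natDegree ≤ i ∧ i ≤ (j : ℕ) then
            B.coeff ((j : ℕ) - i) else 0)
        = (if (j : ℕ) - B.natDegree ≤ i ∧ i ≤ (j : ℕ) then
            t ^ (A.natDegree + B.natDegree - 1 - i) * B.coeff ((j : ℕ) - i)
          else 0) := by
      intro i _; split_ifs <;> ring
    rw [Finset.sum_congr rfl h1, ← Finset.sum_filter]
    have h2 : (Finset.range (A.natDegree + B.natDegree)).filter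
        (fun i => (j : ℕ) - B.natDegree ≤ i ∧ i ≤ (j : ℕ))
        = Finset.Icc ((j : ℕ) - B.natDegree) (j : ℕ) := by
      ext i
      simp only [Finset.mem_filter, Finset.mem_range, Finset.mem_Icc]
      omega
    rw [h2]
    have h3 : ∑ a ∈ Finset.Icc ((j : ℕ) - B.natDegree) (j : ℕ),
        t ^ (A.natDegree + B.natDegree - 1 - a) * B.coeff ((j : ℕ) - a)
        = ∑ k ∈ Finset.range (B.natDegree + 1),
            t ^ (A.natDegree + B.natDegree - 1 - (j : ℕ)) * (B.coeff k * t ^ k) := by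
      refine Finset.sum_nbij' (fun a => (j : ℕ) - a) (fun k => (j : ℕ) - k) ?_ ?_ ?_ ?_ ?_
      · intro a ha; simp only [Finset.mem_Icc] at ha; simp only [Finset.mem_range]; omega
      · intro a ha; simp only [Finset.mem_range] at ha; simp only [Finset.mem_Icc]; omega
      · intro a ha; simp only [Finset.mem_Icc] at ha; omega
      · intro a ha; simp only [Finset.mem_range] at ha; omega
      · intro a ha; simp only [Finset.mem_Icc] at ha
        have hexp : A.natDegree + B.natDegree - 1 - a
            = (A.natDegree + B.natDegree - 1 - (j : ℕ)) + ((j : ℕ) - a) := by omega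
        rw [hexp, pow_add]; ring
    rw [h3, ← Finset.mul_sum, eval_eq_sum_range]

/-- Factor a common divisor out of one row of a determinant. -/
lemma det_row_factor {n : ℕ} (M : Matrix (Fin n) (Fin n) ℤ) (i : Fin n) (c : ℤ)
    (h : ∀ j, c ∣ M i j) :
    ∃ M' : Matrix (Fin n) (Fin n) ℤ, M.det = c * M'.det ∧
      ∀ i' : Fin n, i' ≠ i → M' i' = M i' := by
  refine ⟨M.updateRow i (fun j => M i j / c), ?_, ?_⟩
  · have hv : M i = c • fun j => M i j / c := by
      funext j
      simp only [Pi.smul_apply, smul_eq_mul]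
      exact (Int.mul_ediv_cancel' (h j)).symm
    conv_lhs => rw [← Matrix.updateRow_eq_self M i, hv]
    rw [Matrix.det_updateRow_smul]
  · intro i' hi'
    exact Matrix.updateRow_ne hi'

/-- The key divisibility: `p^(ω₁+ω₂)` divides `(n₂ - n₁) * _root_.resultant A B`. -/
lemma key_dvd (A B : Polynomial ℤ) (hd : 1 ≤ A.natDegree) (he : 1 ≤ B.natDegree)
    (p : ℤ) (ω₁ ω₂ : ℕ) (hω : ω₂ ≤ ω₁) (n₁ n₂ : ℤ)
    (hA1 : p ^ ω₁ ∣ A.eval n₁) (hB1 : p ^ ω₁ ∣ B.eval n₁)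
    (hA2 : p ^ ω₂ ∣ A.eval n₂) (hB2 : p ^ ω₂ ∣ B.eval n₂) :
    p ^ (ω₁ + ω₂) ∣ (n₂ - n₁) * _root_.resultant A B := by
  set N := A.natDegree + B.natDegree with hN
  have hN2 : 2 ≤ N := by omega
  set U : Matrix (Fin N) (Fin N) ℤ := Matrix.of fun i j =>
    if (i : ℕ) < N - 2 then (if i = j then 1 else 0)
    else if (i : ℕ) = N - 2 then n₂ ^ (N - 1 - (j : ℕ)) - n₁ ^ (N - 1 - (j : ℕ))
    else n₁ ^ (N - 1 - (j : ℕ)) with hU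
  have hdetU : U.det = n₂ - n₁ := by
    rw [Matrix.det_of_lowerTriangular U ?tri]
    case tri =>
      intro i j hij
      have hlt : (i : ℕ) < (j : ℕ) := hij
      simp only [hU, Matrix.of_apply]
      have hj2 : (j : ℕ) < N := j.2
      by_cases h1 : (i : ℕ) < N - 2
      · rw [if_pos h1, if_neg (by intro hij'; rw [hij'] at hlt; omega)]
      · rw [if_neg h1]
        by_cases h2 : (i : ℕ) = N - 2
        · rw [if_pos h2]
          have : N - 1 - (j : ℕ) = 0 := by omega
          rw [this]; simp
        · omega
    rw [Finset.prod_eq_single (⟨N - 2, by omega⟩ : Fin N)]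
    · simp only [hU, Matrix.of_apply, Fin.val_mk]
      rw [if_neg (by omega), if_pos (by trivial)]
      have : N - 1 - (N - 2) = 1 := by omega
      rw [this]; ring
    · intro b _ hb
      simp only [hU, Matrix.of_apply]
      have hbv : (b : ℕ) ≠ N - 2 := by
        intro h; exact hb (Fin.ext (by simpa using h))
      by_cases h1 : (b : ℕ) < N - 2
      · rw [if_pos h1, if_pos (by trivial)]
      · rw [if_neg h1, if_neg hbv]
        have hb2 : (b : ℕ) = N - 1 := by have := b.2; omega
        have : N - 1 - (b : ℕ) = 0 := by omega
        rw [this, pow_zero]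
    · intro h; exact absurd (Finset.mem_univ _) h
  set W := U * sylvesterMatrix A B with hW
  have hdetW : W.det = (n₂ - n₁) * _root_.resultant A B := by
    rw [hW, Matrix.det_mul, hdetU, _root_.resultant]
  have r₁ : Fin N := ⟨N - 1, by omega⟩
  set i₁ : Fin N := ⟨N - 1, by omega⟩ with hi₁
  set i₂ : Fin N := ⟨N - 2, by omega⟩ with hi₂
  have hrow1 : ∀ j, W i₁ j
      = if (j : ℕ) < B.natDegree then n₁ ^ (B.natDegree - 1 - (j : ℕ)) * A.eval n₁
        else n₁ ^ (N - 1 - (j : ℕ)) * B.eval n₁ := by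
    intro j
    rw [← sylvester_col_eval A B n₁ j, hW, Matrix.mul_apply]
    refine Finset.sum_congr rfl fun k _ => ?_
    congr 1
    simp only [hU, hi₁, Matrix.of_apply, Fin.val_mk]
    rw [if_neg (by omega), if_neg (by omega)]
  have hrow2 : ∀ j, W i₂ j
      = (if (j : ℕ) < B.natDegree then n₂ ^ (B.natDegree - 1 - (j : ℕ)) * A.eval n₂
          else n₂ ^ (N - 1 - (j : ℕ)) * B.eval n₂)
        - (if (j : ℕ) < B.natDegree then n₁ ^ (B.natDegree - 1 - (j : ℕ)) * A.eval n₁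
          else n₁ ^ (N - 1 - (j : ℕ)) * B.eval n₁) := by
    intro j
    rw [← sylvester_col_eval A B n₂ j, ← sylvester_col_eval A B n₁ j, hW, Matrix.mul_apply,
      ← Finset.sum_sub_distrib]
    refine Finset.sum_congr rfl fun k _ => ?_
    have : U i₂ k = n₂ ^ (N - 1 - (k : ℕ)) - n₁ ^ (N - 1 - (k : ℕ)) := by
      simp only [hU, hi₂, Matrix.of_apply, Fin.val_mk]
      rw [if_neg (by omega), if_pos (by trivial)]
    rw [this]; ring
  have hdvd1 : ∀ j, p ^ ω₁ ∣ W i₁ j := by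
    intro j
    rw [hrow1 j]
    split_ifs
    · exact Dvd.dvd.mul_left hA1 _
    · exact Dvd.dvd.mul_left hB1 _
  have hdvd2 : ∀ j, p ^ ω₂ ∣ W i₂ j := by
    intro j
    have hp21 : p ^ ω₂ ∣ p ^ ω₁ := pow_dvd_pow p hω
    rw [hrow2 j]
    refine dvd_sub ?_ ?_
    · split_ifs
      · exact Dvd.dvd.mul_left hA2 _
      · exact Dvd.dvd.mul_left hB2 _
    · split_ifs
      · exact Dvd.dvd.mul_left (hp21.trans hA1) _
      · exact Dvd.dvd.mul_left (hp21.trans hB1) _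
  obtain ⟨W₁, hW₁, hW₁rows⟩ := det_row_factor W i₁ (p ^ ω₁) hdvd1
  have hne : i₂ ≠ i₁ := by
    intro h
    have := congrArg Fin.val h
    simp only [hi₁, hi₂] at this
    omega
  obtain ⟨W₂, hW₂, _⟩ := det_row_factor W₁ i₂ (p ^ ω₂)
    (fun j => by rw [hW₁rows i₂ hne]; exact hdvd2 j)
  refine ⟨W₂.det, ?_⟩
  rw [← hdetW, hW₁, hW₂, pow_add]
  ring

/-- Nonvanishing of the resultant for coprime polynomials. -/
lemma resultant_ne_zero (A B : Polynomial ℤ) (hA : A.Monic) (hB : B.Monic)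
    (hcop : IsCoprime (A.map (Int.castRingHom ℚ)) (B.map (Int.castRingHom ℚ)))
    (hd : 1 ≤ A.natDegree) (he : 1 ≤ B.natDegree) : _root_.resultant A B ≠ 0 := by
  intro h0
  obtain ⟨z, hz, hzv⟩ := Matrix.exists_mulVec_eq_zero_iff.2 h0
  set UZ : Polynomial ℤ := ∑ j : Fin (A.natDegree + B.natDegree),
    if (j : ℕ) < B.natDegree then C (z j) * X ^ (B.natDegree - 1 - (j : ℕ)) else 0 with hUZ
  set VZ : Polynomial ℤ := ∑ j : Fin (A.natDegree + B.natDegree),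
    if (j : ℕ) < B.natDegree then 0
    else C (z j) * X ^ (A.natDegree + B.natDegree - 1 - (j : ℕ)) with hVZ
  have heval : ∀ t : ℤ, (UZ * A + VZ * B).eval t = 0 := by
    intro t
    have hU : UZ.eval t
        = ∑ j : Fin (A.natDegree + B.natDegree),
            if (j : ℕ) < B.natDegree then z j * t ^ (B.natDegree - 1 - (j : ℕ))
            else 0 := by
      rw [hUZ, eval_finset_sum]
      refine Finset.sum_congr rfl fun j _ => ?_
      split_ifs <;> simp
    have hV : VZ.eval t
        = ∑ j : Fin (A.natDegree + B.natDegree),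
            if (j : ℕ) < B.natDegree then 0
            else z j * t ^ (A.natDegree + B.natDegree - 1 - (j : ℕ)) := by
      rw [hVZ, eval_finset_sum]
      refine Finset.sum_congr rfl fun j _ => ?_
      split_ifs <;> simp
    rw [eval_add, eval_mul, eval_mul, hU, hV, Finset.sum_mul, Finset.sum_mul,
      ← Finset.sum_add_distrib]
    have hstep : ∀ j : Fin (A.natDegree + B.natDegree),
        ((if (j : ℕ) < B.natDegree then z j * t ^ (B.natDegree - 1 - (j : ℕ)) else 0)
            * A.eval t)
          + ((if (j : ℕ) < B.natDegree then 0
              else z j * t ^ (A.natDegree + B.natDegree - 1 - (j : ℕ))) * B.eval t)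
        = z j * ∑ i : Fin (A.natDegree + B.natDegree),
            t ^ (A.natDegree + B.natDegree - 1 - (i : ℕ)) * sylvesterMatrix A B i j := by
      intro j
      rw [sylvester_col_eval A B t j]
      split_ifs <;> ring
    rw [Finset.sum_congr rfl fun j _ => hstep j]
    calc ∑ j : Fin (A.natDegree + B.natDegree),
          z j * ∑ i : Fin (A.natDegree + B.natDegree),
            t ^ (A.natDegree + B.natDegree - 1 - (i : ℕ)) * sylvesterMatrix A B i j
        = ∑ j : Fin (A.natDegree + B.natDegree), ∑ i : Fin (A.natDegree + B.natDegree),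
            t ^ (A.natDegree + B.natDegree - 1 - (i : ℕ))
              * (sylvesterMatrix A B i j * z j) := by
          refine Finset.sum_congr rfl fun j _ => ?_
          rw [Finset.mul_sum]
          exact Finset.sum_congr rfl fun i _ => by ring
      _ = ∑ i : Fin (A.natDegree + B.natDegree), ∑ j : Fin (A.natDegree + B.natDegree),
            t ^ (A.natDegree + B.natDegree - 1 - (i : ℕ))
              * (sylvesterMatrix A B i j * z j) := Finset.sum_comm
      _ = ∑ i : Fin (A.natDegree + B.natDegree),
            t ^ (A.natDegree + B.natDegree - 1 - (i : ℕ))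
              * ((sylvesterMatrix A B).mulVec z i) := by
          refine Finset.sum_congr rfl fun i _ => ?_
          rw [Matrix.mulVec, dotProduct, Finset.mul_sum]
      _ = 0 := by rw [hzv]; simp
  have hQ : UZ * A + VZ * B = 0 := by
    apply Polynomial.funext
    intro t
    rw [heval t, eval_zero]
  have hQ' : UZ.map (Int.castRingHom ℚ) * A.map (Int.castRingHom ℚ)
      + VZ.map (Int.castRingHom ℚ) * B.map (Int.castRingHom ℚ) = 0 := by
    have := congrArg (Polynomial.map (Int.castRingHom ℚ)) hQ
    simpa [Polynomial.map_add, Polynomial.map_mul] using this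
  have hdvd : B.map (Int.castRingHom ℚ) ∣ UZ.map (Int.castRingHom ℚ) := by
    refine hcop.symm.dvd_of_dvd_mul_right ⟨-(VZ.map (Int.castRingHom ℚ)), ?_⟩
    linear_combination hQ'
  have hBmap : (B.map (Int.castRingHom ℚ)).natDegree = B.natDegree :=
    hB.natDegree_map _
  have hU0 : UZ.map (Int.castRingHom ℚ) = 0 := by
    by_contra hne
    have h1 := Polynomial.natDegree_le_of_dvd hdvd hne
    have h3 : (UZ.map (Int.castRingHom ℚ)).natDegree ≤ B.natDegree - 1 := by
      refine le_trans Polynomial.natDegree_map_le ?_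
      rw [hUZ]
      refine Polynomial.natDegree_sum_le_of_forall_le _ _ fun j _ => ?_
      split_ifs with hjB
      · exact le_trans (Polynomial.natDegree_C_mul_X_pow_le _ _) (by omega)
      · simp
    omega
  have hV0 : VZ.map (Int.castRingHom ℚ) = 0 := by
    have hmul : VZ.map (Int.castRingHom ℚ) * B.map (Int.castRingHom ℚ) = 0 := by
      linear_combination hQ' - congrArg (· * A.map (Int.castRingHom ℚ)) hU0
    rcases mul_eq_zero.mp hmul with h | h
    · exact h
    · exact absurd h (hB.map _).ne_zero
  have hinj : Function.Injective (Polynomial.map (Int.castRingHom ℚ) : _ → Polynomial ℚ) :=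
    Polynomial.map_injective _ Int.cast_injective
  have hUZ0 : UZ = 0 := by
    apply hinj
    simpa using hU0
  have hVZ0 : VZ = 0 := by
    apply hinj
    simpa using hV0
  apply hz
  funext j
  by_cases hjB : (j : ℕ) < B.natDegree
  · have hc : UZ.coeff (B.natDegree - 1 - (j : ℕ)) = z j := by
      rw [hUZ, Polynomial.finset_sum_coeff]
      rw [Finset.sum_eq_single j]
      · rw [if_pos hjB]
        simp [Polynomial.coeff_C_mul, Polynomial.coeff_X_pow]
      · intro b _ hbj
        split_ifs with hbB
        · simp only [Polynomial.coeff_C_mul, Polynomial.coeff_X_pow]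
          rw [if_neg, mul_zero]
          intro heq
          have hb : (b : ℕ) = (j : ℕ) := by omega
          exact hbj (Fin.ext hb)
        · simp
      · intro h; exact absurd (Finset.mem_univ _) h
    rw [hUZ0] at hc
    simp only [Polynomial.coeff_zero] at hc
    exact hc.symm ▸ rfl
  · have hjN : (j : ℕ) < A.natDegree + B.natDegree := j.2
    have hc : VZ.coeff (A.natDegree + B.natDegree - 1 - (j : ℕ)) = z j := by
      rw [hVZ, Polynomial.finset_sum_coeff]
      rw [Finset.sum_eq_single j]
      · rw [if_neg hjB]
        simp [Polynomial.coeff_C_mul, Polynomial.coeff_X_pow]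
      · intro b _ hbj
        split_ifs with hbB
        · simp
        · simp only [Polynomial.coeff_C_mul, Polynomial.coeff_X_pow]
          rw [if_neg, mul_zero]
          intro heq
          have hbN : (b : ℕ) < A.natDegree + B.natDegree := b.2
          have hb : (b : ℕ) = (j : ℕ) := by omega
          exact hbj (Fin.ext hb)
      · intro h; exact absurd (Finset.mem_univ _) h
    rw [hVZ0] at hc
    simp only [Polynomial.coeff_zero] at hc
    exact hc.symm ▸ rfl


theorem valuation_of_difference (A B : Polynomial ℤ)
    (hA : A.Monic) (hB : B.Monic)
    (hcop : IsCoprime (A.map (Int.castRingHom ℚ)) (B.map (Int.castRingHom ℚ)))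
    (p : ℕ) (hp : p.Prime) (ω₁ ω₂ : ℕ) (n₁ n₂ : ℤ) (hne : n₁ ≠ n₂)
    (h₁ : ((p : ℤ) ^ ω₁) ∣ (Int.gcd (A.eval n₁) (B.eval n₁) : ℤ))
    (h₂ : ((p : ℤ) ^ ω₂) ∣ (Int.gcd (A.eval n₂) (B.eval n₂) : ℤ)) :
    ω₁ + ω₂ ≤ padicValInt p (n₂ - n₁) + padicValInt p (_root_.resultant A B) := by
  haveI : Fact p.Prime := ⟨hp⟩
  have hxpow : ∀ ω : ℕ, ((p : ℤ) ^ ω ∣ (1 : ℤ)) → ω = 0 := by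
    intro ω h
    have h1 : ((p : ℤ) ^ ω) = 1 := Int.eq_one_of_dvd_one (by positivity) h
    have h2 : (p : ℕ) ^ ω = 1 := by exact_mod_cast h1
    have := hp.two_le
    rcases Nat.eq_zero_or_pos ω with h | h
    · exact h
    · exfalso
      have : 2 ^ ω ≤ p ^ ω := Nat.pow_le_pow_left hp.two_le ω
      have h2ω : 2 ^ ω ≥ 2 := by
        calc 2 = 2 ^ 1 := (pow_one 2).symm
        _ ≤ 2 ^ ω := Nat.pow_le_pow_right (by norm_num) h
      omega
  have hg1 : ∀ x : ℤ, Int.gcd x 1 = 1 := fun x => by rw [Int.gcd_def]; simp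
  have hg2 : ∀ x : ℤ, Int.gcd 1 x = 1 := fun x => by rw [Int.gcd_def]; simp
  by_cases hd : A.natDegree = 0
  · have hA1 : A = 1 := hA.natDegree_eq_zero.mp hd
    rw [hA1] at h₁ h₂
    simp only [Polynomial.eval_one, hg2] at h₁ h₂
    rw [hxpow ω₁ (by simpa using h₁), hxpow ω₂ (by simpa using h₂)]
    simp
  by_cases he : B.natDegree = 0
  · have hB1 : B = 1 := hB.natDegree_eq_zero.mp he
    rw [hB1] at h₁ h₂
    simp only [Polynomial.eval_one, hg1] at h₁ h₂
    rw [hxpow ω₁ (by simpa using h₁), hxpow ω₂ (by simpa using h₂)]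
    simp
  have hd' : 1 ≤ A.natDegree := Nat.one_le_iff_ne_zero.mpr hd
  have he' : 1 ≤ B.natDegree := Nat.one_le_iff_ne_zero.mpr he
  have hA1 : ((p : ℤ) ^ ω₁) ∣ A.eval n₁ := h₁.trans (Int.gcd_dvd_left _ _)
  have hB1 : ((p : ℤ) ^ ω₁) ∣ B.eval n₁ := h₁.trans (Int.gcd_dvd_right _ _)
  have hA2 : ((p : ℤ) ^ ω₂) ∣ A.eval n₂ := h₂.trans (Int.gcd_dvd_left _ _)
  have hB2 : ((p : ℤ) ^ ω₂) ∣ B.eval n₂ := h₂.trans (Int.gcd_dvd_right _ _)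
  have hkey : ((p : ℤ) ^ (ω₁ + ω₂)) ∣ (n₂ - n₁) * _root_.resultant A B := by
    rcases le_total ω₂ ω₁ with h | h
    · exact key_dvd A B hd' he' (p : ℤ) ω₁ ω₂ h n₁ n₂ hA1 hB1 hA2 hB2
    · have hk := key_dvd A B hd' he' (p : ℤ) ω₂ ω₁ h n₂ n₁ hA2 hB2 hA1 hB1
      have heq : (n₂ - n₁) * _root_.resultant A B = -((n₁ - n₂) * _root_.resultant A B) := by ring
      rw [heq, add_comm ω₁ ω₂]
      exact dvd_neg.mpr hk
  have hR : _root_.resultant A B ≠ 0 := resultant_ne_zero A B hA hB hcop hd' he'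
  have hD : n₂ - n₁ ≠ 0 := sub_ne_zero_of_ne hne.symm
  have hval := (padicValInt_dvd_iff (ω₁ + ω₂) ((n₂ - n₁) * _root_.resultant A B)).1 hkey
  rcases hval with h | h
  · exact absurd h (mul_ne_zero hD hR)
  · rwa [padicValInt.mul hD hR] at h
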